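/- Let ρ = u^{1/r} where 0 < u < 1 is rational and r > 1 is minimal (so ρ is irrational with minimal polynomial x^r − u over ℚ). Then μ_{ρ,N} is not a spectral measure. -/

import Mathlib

open MeasureTheory Complex Real
open scoped ENNReal

/-- The Fourier transform `μ̂(ξ) = ∫ e^{-2πiξx} dμ(x)`. -/
noncomputable def FT (μ : Measure ℝ) (ξ : ℝ) : ℂ :=
  ∫ x, Complex.exp (-2 * Real.pi * Complex.I * ξ * x) ∂μ

/-- `μ` is the self-similar measure `μ(·) = (1/N) ∑_{j<N} μ(ρ⁻¹(·) − j)`. -/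
def IsSelfSimilar (ρ : ℝ) (N : ℕ) (μ : Measure ℝ) : Prop :=
  μ = (N : ℝ≥0∞)⁻¹ • ∑ j ∈ Finset.range N, μ.map (fun x => ρ * x + (j : ℝ))

/-- Orthonormality of the exponentials `e_λ, λ ∈ Λ`, in `L²(μ)`. -/
def ExpOrthonormal (μ : Measure ℝ) (Λ : Set ℝ) : Prop :=
  ∀ l ∈ Λ, ∀ l' ∈ Λ, FT μ (l - l') = if l = l' then 1 else 0

/-- Totality of the exponentials `e_λ, λ ∈ Λ`, in `L²(μ)`. -/
def ExpTotal (μ : Measure ℝ) (Λ : Set ℝ) : Prop :=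
  ∀ f : Lp ℂ 2 μ,
    (∀ l ∈ Λ, ∫ x, f x *
      (starRingEnd ℂ) (Complex.exp (-2 * Real.pi * Complex.I * l * x)) ∂μ = 0) → f = 0

/-- `μ` is a spectral measure: `L²(μ)` admits an orthonormal basis of
exponentials, i.e. a countable maximal orthonormal family `(e_λ)_{λ∈Λ}`. -/
def IsSpectral (μ : Measure ℝ) : Prop :=
  ∃ Λ : Set ℝ, Λ.Countable ∧ ExpOrthonormal μ Λ ∧ ExpTotal μ Λ


set_option maxHeartbeats 1000000

namespace NSpec

noncomputable def eFun (w : ℝ) : ℝ → ℂ := fun x => Complex.exp (-2 * Real.pi * Complex.I * w * x)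

noncomputable def mfun (N : ℕ) (θ : ℝ) : ℂ :=
  (N : ℂ)⁻¹ * ∑ j ∈ Finset.range N, Complex.exp (-2 * Real.pi * Complex.I * θ * j)

lemma eFun_apply (w x : ℝ) : eFun w x = Complex.exp (-2 * Real.pi * Complex.I * w * x) := rfl

lemma exponent_eq (w x : ℝ) : (-2 * Real.pi * Complex.I * w * x) = ((-2 * Real.pi * w * x : ℝ) : ℂ) * Complex.I := by
  push_cast; ring

lemma norm_eFun (w x : ℝ) : ‖eFun w x‖ = 1 := by
  rw [eFun_apply, exponent_eq]
  exact Complex.norm_exp_ofReal_mul_I _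

lemma eFun_mul (w w' x : ℝ) : eFun w x * eFun w' x = eFun (w + w') x := by
  rw [eFun_apply, eFun_apply, eFun_apply, ← Complex.exp_add]
  congr 1; push_cast; ring

lemma conj_eFun (w x : ℝ) : (starRingEnd ℂ) (eFun w x) = eFun (-w) x := by
  rw [eFun_apply, eFun_apply, ← Complex.exp_conj]
  congr 1
  simp only [map_mul, map_neg, map_ofNat, Complex.conj_I, Complex.conj_ofReal]
  push_cast; ring

lemma continuous_eFun (w : ℝ) : Continuous (eFun w) := by
  unfold eFun; fun_prop

lemma integrable_eFun (κ : Measure ℝ) [IsFiniteMeasure κ] (w : ℝ) : Integrable (eFun w) κ := by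
  refine (integrable_const (1:ℝ)).mono' ((continuous_eFun w).aestronglyMeasurable) ?_
  filter_upwards with x
  rw [norm_eFun]

lemma FT_eq (κ : Measure ℝ) (ξ : ℝ) : FT κ ξ = ∫ x, eFun ξ x ∂κ := rfl

lemma FT_zero (κ : Measure ℝ) [IsProbabilityMeasure κ] : FT κ 0 = 1 := by
  rw [FT_eq]
  have : ∀ x : ℝ, eFun 0 x = 1 := by
    intro x; rw [eFun_apply]; norm_num
  simp only [this, integral_const, measure_univ, probReal_univ, ENNReal.toReal_one, one_smul]

lemma norm_FT_le_one (κ : Measure ℝ) [IsProbabilityMeasure κ] (ξ : ℝ) : ‖FT κ ξ‖ ≤ 1 := by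
  rw [FT_eq]
  calc ‖∫ x, eFun ξ x ∂κ‖ ≤ ∫ x, ‖eFun ξ x‖ ∂κ := norm_integral_le_integral_norm _
  _ = 1 := by simp only [norm_eFun]; simp [measure_univ]

lemma FT_continuous (κ : Measure ℝ) [IsProbabilityMeasure κ] : Continuous (FT κ) := by
  have : (FT κ) = fun ξ => ∫ x, eFun ξ x ∂κ := rfl
  rw [this]
  apply continuous_of_dominated (bound := fun _ => (1:ℝ))
  · exact fun ξ => (continuous_eFun ξ).aestronglyMeasurable
  · intro ξ; filter_upwards with x; rw [norm_eFun]
  · exact integrable_const 1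
  · filter_upwards with x
    have : Continuous fun ξ : ℝ => (-2 * Real.pi * Complex.I * ξ * x) := by fun_prop
    exact Complex.continuous_exp.comp this

lemma FT_ne_zero_near (κ : Measure ℝ) [IsProbabilityMeasure κ] :
    ∃ δ : ℝ, 0 < δ ∧ ∀ ζ : ℝ, |ζ| ≤ δ → FT κ ζ ≠ 0 := by
  have hc : ContinuousAt (FT κ) 0 := (FT_continuous κ).continuousAt
  rcases Metric.continuousAt_iff.mp hc 1 one_pos with ⟨δ, hδ, h⟩
  refine ⟨δ/2, by linarith, fun ζ hζ hzero => ?_⟩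
  have : dist ζ 0 < δ := by
    rw [Real.dist_eq, sub_zero]; linarith
  have h2 := h this
  rw [FT_zero, hzero, dist_eq_norm] at h2
  simp at h2


-- step functional equation
lemma FT_step (κ : Measure ℝ) [IsProbabilityMeasure κ] (a : ℝ) (N : ℕ) (hN : 0 < N)
    (hκ : IsSelfSimilar a N κ) (ξ : ℝ) :
    FT κ ξ = mfun N ξ * FT κ (a * ξ) := by
  have hmeas : ∀ j : ℕ, Measurable (fun x : ℝ => a * x + (j:ℝ)) := by
    intro j; fun_prop
  have hprob : ∀ j : ℕ, IsProbabilityMeasure (κ.map (fun x : ℝ => a * x + (j:ℝ))) := by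
    intro j; exact Measure.isProbabilityMeasure_map (hmeas j).aemeasurable
  have key : ∀ j : ℕ, ∫ x, eFun ξ x ∂(κ.map (fun x : ℝ => a * x + (j:ℝ)))
      = Complex.exp (-2 * Real.pi * Complex.I * ξ * j) * FT κ (a * ξ) := by
    intro j
    rw [integral_map (hmeas j).aemeasurable (continuous_eFun ξ).aestronglyMeasurable]
    have : ∀ x : ℝ, eFun ξ (a * x + j) =
        Complex.exp (-2 * Real.pi * Complex.I * ξ * j) * eFun (a * ξ) x := by
      intro x
      rw [eFun_apply, eFun_apply, ← Complex.exp_add]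
      congr 1; push_cast; ring
    simp only [this]
    rw [integral_const_mul, ← FT_eq]
  conv_lhs => rw [FT_eq, hκ]
  rw [integral_smul_measure, integral_finset_sum_measure (fun j _ => integrable_eFun _ ξ)]
  simp only [key]
  rw [← Finset.sum_mul, mfun]
  have hN' : ((N:ℝ≥0∞)⁻¹).toReal = (N:ℝ)⁻¹ := by
    simp
  rw [hN', Complex.real_smul]
  push_cast
  ring

lemma FT_iter (κ : Measure ℝ) [IsProbabilityMeasure κ] (a : ℝ) (N : ℕ) (hN : 0 < N)
    (hκ : IsSelfSimilar a N κ) (ξ : ℝ) (K : ℕ) :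
    FT κ ξ = (∏ n ∈ Finset.range K, mfun N (a ^ n * ξ)) * FT κ (a ^ K * ξ) := by
  induction K with
  | zero => simp
  | succ K ih =>
    rw [ih, FT_step κ a N hN hκ (a ^ K * ξ), Finset.prod_range_succ, pow_succ]
    rw [show a ^ K * a * ξ = a * (a ^ K * ξ) by ring, mul_assoc]

-- mfun facts
lemma norm_mfun_le_one (N : ℕ) (hN : 0 < N) (θ : ℝ) : ‖mfun N θ‖ ≤ 1 := by
  rw [mfun]
  rw [norm_mul]
  have h1 : ‖((N:ℂ))⁻¹‖ = (N:ℝ)⁻¹ := by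
    rw [norm_inv]; simp
  rw [h1]
  have h2 : ‖∑ j ∈ Finset.range N, Complex.exp (-2 * Real.pi * Complex.I * θ * j)‖ ≤ (N:ℝ) := by
    calc ‖∑ j ∈ Finset.range N, Complex.exp (-2 * Real.pi * Complex.I * θ * j)‖
        ≤ ∑ j ∈ Finset.range N, ‖Complex.exp (-2 * Real.pi * Complex.I * θ * j)‖ :=
          norm_sum_le _ _
      _ = ∑ j ∈ Finset.range N, 1 := by
          refine Finset.sum_congr rfl fun j _ => ?_
          exact norm_eFun θ j
      _ = (N:ℝ) := by simp
  calc (N:ℝ)⁻¹ * ‖∑ j ∈ Finset.range N, Complex.exp (-2 * Real.pi * Complex.I * θ * j)‖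
      ≤ (N:ℝ)⁻¹ * N := by
        apply mul_le_mul_of_nonneg_left h2
        positivity
    _ = 1 := by
        field_simp


lemma term_pow (θ : ℝ) (j : ℕ) :
    Complex.exp (-2 * Real.pi * Complex.I * θ * j) = (Complex.exp (-2 * Real.pi * Complex.I * θ)) ^ j := by
  rw [← Complex.exp_nat_mul]
  congr 1; ring

lemma two_pi_I_ne : (2:ℂ) * Real.pi * Complex.I ≠ 0 := by
  simp [Real.pi_ne_zero, Complex.I_ne_zero]

lemma z_eq_one_iff (θ : ℝ) :
    Complex.exp (-2 * Real.pi * Complex.I * θ) = 1 ↔ ∃ k : ℤ, θ = k := by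
  rw [Complex.exp_eq_one_iff]
  constructor
  · rintro ⟨n, hn⟩
    refine ⟨-n, ?_⟩
    have h : (θ : ℂ) * (2 * Real.pi * Complex.I) = ((-n : ℤ) : ℂ) * (2 * Real.pi * Complex.I) := by
      push_cast
      linear_combination -hn
    have := mul_right_cancel₀ two_pi_I_ne h
    exact_mod_cast congrArg Complex.re this
  · rintro ⟨k, rfl⟩
    exact ⟨-k, by push_cast; ring⟩

lemma mfun_eq_zero_of (N : ℕ) (hN : 1 < N) (k : ℤ) (hk : ¬ (N:ℤ) ∣ k) :
    mfun N ((k : ℝ) / N) = 0 := by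
  set θ : ℝ := (k : ℝ) / N with hθ
  set z := Complex.exp (-2 * Real.pi * Complex.I * θ) with hz
  have hNne : (N:ℝ) ≠ 0 := by positivity
  have hNC : (N:ℂ) ≠ 0 := by exact_mod_cast Complex.ofReal_ne_zero.mpr hNne
  have hzN : z ^ N = 1 := by
    rw [hz, ← Complex.exp_nat_mul]
    rw [show (N:ℂ) * (-2 * Real.pi * Complex.I * θ) = ((-k : ℤ):ℂ) * (2 * Real.pi * Complex.I) by
      rw [hθ]; push_cast; field_simp]
    exact Complex.exp_int_mul_two_pi_mul_I (-k)
  have hz1 : z ≠ 1 := by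
    rw [hz, Ne, z_eq_one_iff]
    rintro ⟨m, hm⟩
    apply hk
    have hk2 : (k:ℝ) = (N:ℝ) * m := by
      rw [hθ] at hm; field_simp at hm; linarith
    exact ⟨m, by exact_mod_cast hk2⟩
  rw [mfun]
  simp only [term_pow, ← hz]
  rw [geom_sum_eq hz1, hzN]
  simp

lemma mfun_zero_imp (N : ℕ) (hN : 1 < N) (θ : ℝ) (h : mfun N θ = 0) :
    ∃ k : ℤ, θ = (k : ℝ) / N ∧ ¬ (N:ℤ) ∣ k := by
  set z := Complex.exp (-2 * Real.pi * Complex.I * θ) with hz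
  have hNne : (N:ℝ) ≠ 0 := by positivity
  have hsum : ∑ j ∈ Finset.range N, z ^ j = 0 := by
    have hNCne : ((N:ℂ))⁻¹ ≠ 0 := by
      simp only [ne_eq, inv_eq_zero, Nat.cast_eq_zero]
      omega
    rw [mfun] at h
    simp only [term_pow, ← hz] at h
    rcases mul_eq_zero.mp h with h' | h'
    · exact absurd h' hNCne
    · exact h'
  have h0 : z ^ N - 1 = 0 := by
    rw [← geom_sum_mul z N, hsum, zero_mul]
  have hzN : Complex.exp ((N:ℂ) * (-2 * Real.pi * Complex.I * θ)) = 1 := by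
    rw [Complex.exp_nat_mul, ← hz]
    exact sub_eq_zero.mp h0
  rcases Complex.exp_eq_one_iff.mp hzN with ⟨n, hn⟩
  have h2 : ((θ * N : ℝ) : ℂ) * (2 * Real.pi * Complex.I)
      = ((-n : ℤ):ℂ) * (2 * Real.pi * Complex.I) := by
    push_cast
    linear_combination -hn
  have h3 := mul_right_cancel₀ two_pi_I_ne h2
  have h4 : θ * N = ((-n : ℤ) : ℝ) := by exact_mod_cast congrArg Complex.re h3
  refine ⟨-n, ?_, ?_⟩
  · rw [eq_div_iff hNne]
    exact h4
  · rintro ⟨c, hc⟩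
    have h5 : θ * N = (c:ℝ) * N := by
      rw [h4, hc]; push_cast; ring
    have hθc : θ = (c:ℝ) := mul_right_cancel₀ hNne h5
    have hz1 : z = 1 := by
      rw [hz, z_eq_one_iff]
      exact ⟨c, hθc⟩
    rw [hz1] at hsum
    simp at hsum
    omega

lemma norm_mfun_lt_one (N : ℕ) (hN : 1 < N) (θ : ℝ) (hθ : ¬ ∃ k : ℤ, θ = k) :
    ‖mfun N θ‖ < 1 := by
  set z := Complex.exp (-2 * Real.pi * Complex.I * θ) with hz
  have hz1 : z ≠ 1 := fun h => hθ ((z_eq_one_iff θ).mp (hz ▸ h))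
  have hzabs : ‖z‖ = 1 := by
    rw [hz, show (-2 * Real.pi * Complex.I * θ) = ((-2 * Real.pi * θ : ℝ):ℂ) * Complex.I by push_cast; ring]
    exact Complex.norm_exp_ofReal_mul_I _
  have hzsq : z.re ^ 2 + z.im ^ 2 = 1 := by
    have h1 : Complex.normSq z = 1 := by
      have := Complex.sq_norm z
      rw [hzabs] at this
      rw [← this]; norm_num
    rw [Complex.normSq_apply] at h1
    nlinarith [h1]
  have hre : z.re < 1 := by
    rcases lt_or_eq_of_le (by nlinarith [sq_nonneg z.im, sq_nonneg (z.re - 1), sq_nonneg (z.re + 1)] : z.re ≤ 1) with h | h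
    · exact h
    · exfalso
      apply hz1
      have him : z.im = 0 := by nlinarith [hzsq, h]
      apply Complex.ext <;> simp [h, him]
  have hn1z : ‖1 + z‖ < 2 := by
    have h2 : ‖1 + z‖ ^ 2 = (1 + z.re) ^ 2 + z.im ^ 2 := by
      have := Complex.sq_norm (1 + z)
      rw [this, Complex.normSq_apply]
      simp [Complex.add_re, Complex.add_im]
      ring
    nlinarith [norm_nonneg (1 + z), hre, hzsq]
  have hsplit : ∑ j ∈ Finset.range N, z ^ j = (1 + z) + ∑ j ∈ Finset.Ico 2 N, z ^ j := by
    rw [Finset.range_eq_Ico, ← Finset.sum_Ico_consecutive _ (by omega : 0 ≤ 2) (by omega : 2 ≤ N)]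
    congr 1
    rw [← Finset.range_eq_Ico]
    simp [Finset.sum_range_succ]
  have hico : ‖∑ j ∈ Finset.Ico 2 N, z ^ j‖ ≤ (N : ℝ) - 2 := by
    calc ‖∑ j ∈ Finset.Ico 2 N, z ^ j‖ ≤ ∑ j ∈ Finset.Ico 2 N, ‖z ^ j‖ := norm_sum_le _ _
      _ = ∑ j ∈ Finset.Ico 2 N, 1 := by
          refine Finset.sum_congr rfl fun j _ => ?_
          rw [norm_pow, hzabs, one_pow]
      _ = (N:ℝ) - 2 := by
          rw [Finset.sum_const, Nat.card_Ico]
          have h6 : ((N - 2 : ℕ) : ℝ) = (N:ℝ) - 2 := by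
            push_cast [Nat.cast_sub (by omega : 2 ≤ N)]; ring
          simp [h6]
  have hsum_lt : ‖∑ j ∈ Finset.range N, z ^ j‖ < N := by
    rw [hsplit]
    calc ‖(1 + z) + ∑ j ∈ Finset.Ico 2 N, z ^ j‖ ≤ ‖1 + z‖ + ‖∑ j ∈ Finset.Ico 2 N, z ^ j‖ :=
          norm_add_le _ _
      _ < 2 + ((N:ℝ) - 2) := add_lt_add_of_lt_of_le hn1z hico
      _ = N := by ring
  rw [mfun]
  simp only [term_pow, ← hz]
  rw [norm_mul, norm_inv]
  have hNn : ‖(N:ℂ)‖ = (N:ℝ) := by simp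
  rw [hNn, inv_mul_lt_iff₀ (by positivity : (0:ℝ) < N), mul_one]
  exact hsum_lt


section AlgB
open Polynomial
variable {u : ℚ} {r : ℕ} {ρ : ℝ}

section Alg
variable (hu0 : 0 < u) (hr : 1 < r) (hρ : ρ ^ r = (u : ℝ)) (hρpos : 0 < ρ)
    (hmin : ∀ s : ℕ, 1 ≤ s → s < r → ¬ ∃ v : ℚ, ρ ^ s = (v : ℝ))

include hu0 hr hρ hρpos hmin

lemma pow_rat_dvd : ∀ s : ℕ, (∃ v : ℚ, ρ ^ s = (v : ℝ)) → r ∣ s := by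
  rintro s ⟨v, hv⟩
  have hb : s % r < r := Nat.mod_lt _ (by omega)
  rcases Nat.eq_zero_or_pos (s % r) with h0 | hpos
  · exact Nat.dvd_of_mod_eq_zero h0
  exfalso
  apply hmin (s % r) hpos hb
  have hs : s = r * (s / r) + s % r := (Nat.div_add_mod s r).symm
  have hpow : ρ ^ s = (u : ℝ) ^ (s / r) * ρ ^ (s % r) := by
    conv_lhs => rw [hs]
    rw [pow_add, pow_mul, hρ]
  have huR : (u:ℝ) ≠ 0 := by positivity
  refine ⟨v / u ^ (s / r), ?_⟩
  rw [hpow] at hv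
  push_cast
  field_simp
  rw [mul_comm] at hv
  push_cast at hv
  exact hv

lemma minpoly_deg_eq : (minpoly ℚ ρ).natDegree = r := by
  have haev : (Polynomial.aeval ρ) ((X : ℚ[X]) ^ r - C u) = 0 := by
    simp [hρ]
  have hmon : ((X : ℚ[X]) ^ r - C u).Monic := monic_X_pow_sub_C u (by omega)
  have hint : IsIntegral ℚ ρ := ⟨(X : ℚ[X]) ^ r - C u, hmon, haev⟩
  have hdvd : minpoly ℚ ρ ∣ (X : ℚ[X]) ^ r - C u := minpoly.dvd ℚ ρ haev
  set g := minpoly ℚ ρ with hg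
  set d := g.natDegree with hd
  have hd_le : d ≤ r := by
    have := Polynomial.natDegree_le_of_dvd hdvd hmon.ne_zero
    rwa [Polynomial.natDegree_X_pow_sub_C] at this
  have hd_pos : 0 < d := minpoly.natDegree_pos hint
  by_contra hne
  have hdlt : d < r := lt_of_le_of_ne hd_le hne
  -- complex roots
  have hS : Splits (g.map (algebraMap ℚ ℂ)) := IsAlgClosed.splits _
  set gc := g.map (algebraMap ℚ ℂ) with hgc
  have hcard : d = Multiset.card gc.roots := by
    rw [← hS.natDegree_eq_card_roots, hgc, Polynomial.natDegree_map]
  have hmonic : gc.Monic := (minpoly.monic hint).map _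
  have hcoeff : gc.coeff 0 = (-1) ^ gc.natDegree * gc.roots.prod :=
    hS.coeff_zero_eq_prod_roots_of_monic hmonic
  -- each root has modulus ρ
  have hroot : ∀ z ∈ gc.roots, ‖z‖ = ρ := by
    intro z hzr
    have hz0 : gc.eval z = 0 := (Polynomial.isRoot_of_mem_roots hzr)
    have hdvd2 : gc ∣ ((X : ℂ[X]) ^ r - C (u:ℂ)) := by
      have := Polynomial.map_dvd (algebraMap ℚ ℂ) hdvd
      rwa [Polynomial.map_sub, Polynomial.map_pow, Polynomial.map_X, Polynomial.map_C] at this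
    rcases hdvd2 with ⟨h, hh⟩
    have hzbig : z ^ r = (u : ℂ) := by
      have : ((X : ℂ[X]) ^ r - C (u:ℂ)).eval z = 0 := by
        rw [hh, Polynomial.eval_mul, hz0, zero_mul]
      simpa [sub_eq_zero] using this
    have habs : ‖z‖ ^ r = ρ ^ r := by
      rw [← norm_pow, hzbig, Complex.norm_ratCast, hρ]
      exact abs_of_pos (by positivity)
    rcases lt_trichotomy ‖z‖ ρ with h | h | h
    · exfalso
      have := pow_lt_pow_left₀ h (norm_nonneg z) (by omega : r ≠ 0)
      rw [habs] at this; exact lt_irrefl _ this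
    · exact h
    · exfalso
      have := pow_lt_pow_left₀ h (le_of_lt hρpos) (by omega : r ≠ 0)
      rw [habs] at this; exact lt_irrefl _ this
  -- product of norms
  have hprodnorm : ‖gc.roots.prod‖ = ρ ^ d := by
    have habs : ‖gc.roots.prod‖ = (Multiset.map (fun z : ℂ => ‖z‖) gc.roots).prod := by
      exact map_multiset_prod (normHom : ℂ →*₀ ℝ) _
    rw [habs]
    have hrep : gc.roots.map (fun z : ℂ => ‖z‖) = Multiset.replicate (Multiset.card gc.roots) ρ := by
      apply Multiset.eq_replicate.mpr
      constructor
      · simp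
      · intro b hb
        rcases Multiset.mem_map.mp hb with ⟨z, hz, rfl⟩
        exact hroot z hz
    rw [hrep, Multiset.prod_replicate, ← hcard]
  have hcoeffnorm : ‖gc.coeff 0‖ = ρ ^ d := by
    rw [hcoeff, norm_mul, norm_pow, norm_neg, norm_one, one_pow, one_mul, hprodnorm]
  -- coeff 0 is rational
  have hratcast : gc.coeff 0 = ((g.coeff 0 : ℚ) : ℂ) := by
    rw [hgc, Polynomial.coeff_map]
    simp
  apply hmin d hd_pos hdlt
  refine ⟨|g.coeff 0|, ?_⟩
  rw [← hcoeffnorm, hratcast, Complex.norm_ratCast, Rat.cast_abs]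

lemma lin_indep_pows (c : ℕ → ℚ) (hsum : ∑ i ∈ Finset.range r, (c i : ℝ) * ρ ^ i = 0) :
    ∀ i, i < r → c i = 0 := by
  intro i hi
  by_contra hci
  set P : ℚ[X] := ∑ j ∈ Finset.range r, C (c j) * X ^ j with hP
  have hcoeff : ∀ j, j < r → P.coeff j = c j := by
    intro j hj
    rw [hP, Polynomial.finset_sum_coeff]
    rw [Finset.sum_eq_single j]
    · simp [Polynomial.coeff_C_mul, Polynomial.coeff_X_pow]
    · intro b _ hbj
      simp [Polynomial.coeff_C_mul, Polynomial.coeff_X_pow, hbj, Ne.symm hbj]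
    · intro hji
      exact absurd (Finset.mem_range.mpr hj) hji
  have hPne : P ≠ 0 := by
    intro h0
    apply hci
    rw [← hcoeff i hi, h0, Polynomial.coeff_zero]
  have haev : (Polynomial.aeval ρ) P = 0 := by
    rw [hP]
    rw [map_sum]
    rw [← hsum]
    refine Finset.sum_congr rfl fun j _ => ?_
    rw [map_mul, Polynomial.aeval_C, map_pow, Polynomial.aeval_X]
    norm_num
  have hdegP : P.natDegree < r := by
    have : P.natDegree ≤ r - 1 := by
      rw [hP]
      refine Polynomial.natDegree_sum_le_of_forall_le _ _ fun j hj => ?_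
      calc (C (c j) * X ^ j).natDegree ≤ j := by
            apply le_trans (Polynomial.natDegree_C_mul_le _ _)
            rw [Polynomial.natDegree_X_pow]
        _ ≤ r - 1 := by
            have := Finset.mem_range.mp hj; omega
    omega
  have hmindeg := minpoly.degree_le_of_ne_zero ℚ ρ hPne haev
  have : (minpoly ℚ ρ).natDegree ≤ P.natDegree := Polynomial.natDegree_le_natDegree hmindeg
  rw [minpoly_deg_eq hu0 hr hρ hρpos hmin] at this
  omega

-- decomposition of a power
lemma pow_decomp (n : ℕ) : ρ ^ n = (u:ℝ) ^ (n / r) * ρ ^ (n % r) := by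
  conv_lhs => rw [show n = r * (n / r) + n % r from (Nat.div_add_mod n r).symm]
  rw [pow_add, pow_mul, hρ]

lemma triangle_lemma (n1 n2 n3 : ℕ) (k1 k2 k3 : ℚ) (hk1 : k1 ≠ 0) (hk2 : k2 ≠ 0) (hk3 : k3 ≠ 0)
    (heq : (k1:ℝ) / ρ ^ n1 + (k2:ℝ) / ρ ^ n2 = (k3:ℝ) / ρ ^ n3) :
    n1 % r = n2 % r ∧ n2 % r = n3 % r := by
  have hρne : ρ ≠ 0 := ne_of_gt hρpos
  have hune : (u:ℝ) ≠ 0 := by positivity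
  have huQ : u ≠ 0 := ne_of_gt hu0
  -- clear denominators
  have hmul : (k1:ℝ) * ρ ^ (n2 + n3) + (k2:ℝ) * ρ ^ (n1 + n3) = (k3:ℝ) * ρ ^ (n1 + n2) := by
    have h1 : ρ ^ n1 ≠ 0 := pow_ne_zero _ hρne
    have h2 : ρ ^ n2 ≠ 0 := pow_ne_zero _ hρne
    have h3 : ρ ^ n3 ≠ 0 := pow_ne_zero _ hρne
    field_simp at heq
    rw [pow_add, pow_add, pow_add]
    nlinarith [heq]
  set b1 := (n2 + n3) % r with hb1
  set b2 := (n1 + n3) % r with hb2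
  set b3 := (n1 + n2) % r with hb3
  set A1 : ℚ := k1 * u ^ ((n2 + n3) / r) with hA1
  set A2 : ℚ := k2 * u ^ ((n1 + n3) / r) with hA2
  set A3 : ℚ := k3 * u ^ ((n1 + n2) / r) with hA3
  have hA1ne : A1 ≠ 0 := mul_ne_zero hk1 (pow_ne_zero _ huQ)
  have hA2ne : A2 ≠ 0 := mul_ne_zero hk2 (pow_ne_zero _ huQ)
  have hA3ne : A3 ≠ 0 := mul_ne_zero hk3 (pow_ne_zero _ huQ)
  have hrel : (A1:ℝ) * ρ ^ b1 + (A2:ℝ) * ρ ^ b2 - (A3:ℝ) * ρ ^ b3 = 0 := by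
    rw [hA1, hA2, hA3]
    push_cast
    rw [pow_decomp hu0 hr hρ hρpos hmin (n2+n3)] at hmul
    rw [pow_decomp hu0 hr hρ hρpos hmin (n1+n3)] at hmul
    rw [pow_decomp hu0 hr hρ hρpos hmin (n1+n2)] at hmul
    push_cast at hmul
    linarith [hmul]
  set c : ℕ → ℚ := fun i => (if i = b1 then A1 else 0) + (if i = b2 then A2 else 0)
      - (if i = b3 then A3 else 0) with hc
  have hblt1 : b1 < r := Nat.mod_lt _ (by omega)
  have hblt2 : b2 < r := Nat.mod_lt _ (by omega)
  have hblt3 : b3 < r := Nat.mod_lt _ (by omega)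
  have hcsum : ∑ i ∈ Finset.range r, (c i : ℝ) * ρ ^ i = 0 := by
    have expand : ∀ i, (c i : ℝ) * ρ ^ i = (if i = b1 then (A1:ℝ) * ρ ^ i else 0)
        + (if i = b2 then (A2:ℝ) * ρ ^ i else 0) - (if i = b3 then (A3:ℝ) * ρ ^ i else 0) := by
      intro i
      rw [hc]
      push_cast
      split_ifs <;> ring
    simp only [expand]
    rw [Finset.sum_sub_distrib, Finset.sum_add_distrib]
    rw [Finset.sum_ite_eq' (Finset.range r) b1, Finset.sum_ite_eq' (Finset.range r) b2,
      Finset.sum_ite_eq' (Finset.range r) b3]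
    rw [if_pos (Finset.mem_range.mpr hblt1), if_pos (Finset.mem_range.mpr hblt2),
      if_pos (Finset.mem_range.mpr hblt3)]
    exact hrel
  have hzero := lin_indep_pows hu0 hr hρ hρpos hmin c hcsum
  have hb_eq : b1 = b2 ∧ b2 = b3 := by
    by_cases e12 : b1 = b2 <;> by_cases e13 : b1 = b3 <;> by_cases e23 : b2 = b3
    · exact ⟨e12, e23⟩
    · omega
    · omega
    · -- e12, ¬e13, ¬e23 : c b3 = -A3 ≠ 0
      exfalso
      have := hzero b3 hblt3
      rw [hc] at this
      simp only [if_neg (by omega : ¬ b3 = b1), if_neg (by omega : ¬ b3 = b2), if_pos rfl] at this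
      simp at this
      exact hA3ne this
    · omega
    · -- ¬e12, e13, ¬e23 : c b2 = A2
      exfalso
      have := hzero b2 hblt2
      rw [hc] at this
      simp only [if_neg (by omega : ¬ b2 = b1), if_pos rfl, if_neg (by omega : ¬ b2 = b3)] at this
      simp at this
      exact hA2ne this
    · -- ¬e12, ¬e13, e23 : c b1 = A1
      exfalso
      have := hzero b1 hblt1
      rw [hc] at this
      simp only [if_pos rfl, if_neg (by omega : ¬ b1 = b2), if_neg (by omega : ¬ b1 = b3)] at this
      simp at this
      exact hA1ne this
    · exfalso
      have := hzero b1 hblt1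
      rw [hc] at this
      simp only [if_pos rfl, if_neg (by omega : ¬ b1 = b2), if_neg (by omega : ¬ b1 = b3)] at this
      simp at this
      exact hA1ne this
  obtain ⟨h12, h23⟩ := hb_eq
  constructor
  · have hmod : Nat.ModEq r (n2 + n3) (n1 + n3) := h12
    exact Nat.ModEq.symm (Nat.ModEq.add_right_cancel' n3 hmod)
  · have hmod : Nat.ModEq r (n1 + n3) (n1 + n2) := h23
    exact Nat.ModEq.symm (Nat.ModEq.add_left_cancel' n1 hmod)
end Alg

end AlgB

section WitB
variable {u : ℚ} {r : ℕ} {ρ : ℝ} {N : ℕ}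

def Wit (N : ℕ) (ρ x y : ℝ) (n : ℕ) : Prop :=
  ∃ k : ℤ, ¬ (N:ℤ) ∣ k ∧ ρ ^ n * (x - y) = (k:ℝ) / N

lemma wit_symm (x y : ℝ) (n : ℕ) (h : Wit N ρ x y n) : Wit N ρ y x n := by
  obtain ⟨k, hk, he⟩ := h
  refine ⟨-k, fun hd => hk ((dvd_neg).mp hd), ?_⟩
  push_cast
  have : ρ ^ n * (y - x) = -(ρ ^ n * (x - y)) := by ring
  rw [this, he]
  ring

section Alg
variable (hu0 : 0 < u) (hr : 1 < r) (hρ : ρ ^ r = (u : ℝ)) (hρpos : 0 < ρ)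
    (hmin : ∀ s : ℕ, 1 ≤ s → s < r → ¬ ∃ v : ℚ, ρ ^ s = (v : ℝ)) (hN : 1 < N)

include hu0 hr hρ hρpos hmin hN

lemma wit_k_ne_zero {k : ℤ} (hk : ¬ (N:ℤ) ∣ k) : k ≠ 0 := by
  rintro rfl; exact hk (dvd_zero _)

lemma wit_same_le (x y : ℝ) (hxy : x ≠ y) (n n' : ℕ) (hle : n' ≤ n)
    (h : Wit N ρ x y n) (h' : Wit N ρ x y n') : n % r = n' % r := by
  obtain ⟨k, hk, he⟩ := h
  obtain ⟨k', hk', he'⟩ := h'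
  have hρne : ρ ≠ 0 := ne_of_gt hρpos
  have hkne : k ≠ 0 := by rintro rfl; exact hk (dvd_zero _)
  have hk'ne : k' ≠ 0 := by rintro rfl; exact hk' (dvd_zero _)
  have hNne : (N:ℝ) ≠ 0 := by positivity
  have hk'R : (k':ℝ) ≠ 0 := Int.cast_ne_zero.mpr hk'ne
  have key : ρ ^ (n - n') * ((k':ℝ)/N) = (k:ℝ)/N := by
    rw [← he', ← he, ← mul_assoc, ← pow_add]
    congr 2
    omega
  have key2 : ρ ^ (n - n') * (k':ℝ) = (k:ℝ) := by
    field_simp at key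
    exact key
  have hpow : ρ ^ (n - n') = (k:ℝ) / (k':ℝ) := by
    rw [eq_div_iff hk'R]
    exact key2
  have hdvd : r ∣ (n - n') := by
    apply pow_rat_dvd hu0 hr hρ hρpos hmin
    exact ⟨(k:ℚ)/(k':ℚ), by rw [hpow]; push_cast; ring⟩
  have := (Nat.modEq_iff_dvd' hle).mpr hdvd
  exact (Nat.ModEq.symm this)

lemma wit_same (x y : ℝ) (hxy : x ≠ y) (n n' : ℕ)
    (h : Wit N ρ x y n) (h' : Wit N ρ x y n') : n % r = n' % r := by
  rcases le_total n' n with hle | hle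
  · exact wit_same_le hu0 hr hρ hρpos hmin hN x y hxy n n' hle h h'
  · exact (wit_same_le hu0 hr hρ hρpos hmin hN x y hxy n' n hle h' h).symm

lemma wit_triangle (x y z : ℝ) (hxy : x ≠ y) (hyz : y ≠ z) (hxz : x ≠ z)
    (n1 n2 n3 : ℕ) (h1 : Wit N ρ x y n1) (h2 : Wit N ρ y z n2) (h3 : Wit N ρ x z n3) :
    n1 % r = n2 % r ∧ n2 % r = n3 % r := by
  obtain ⟨k1, hk1, he1⟩ := h1
  obtain ⟨k2, hk2, he2⟩ := h2
  obtain ⟨k3, hk3, he3⟩ := h3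
  have hρne : ρ ≠ 0 := ne_of_gt hρpos
  have hNne : (N:ℝ) ≠ 0 := by positivity
  have hNQ : (N:ℚ) ≠ 0 := by positivity
  apply triangle_lemma hu0 hr hρ hρpos hmin n1 n2 n3 ((k1:ℚ)/N) ((k2:ℚ)/N) ((k3:ℚ)/N)
  · exact div_ne_zero (Int.cast_ne_zero.mpr (wit_k_ne_zero hu0 hr hρ hρpos hmin hN hk1)) hNQ
  · exact div_ne_zero (Int.cast_ne_zero.mpr (wit_k_ne_zero hu0 hr hρ hρpos hmin hN hk2)) hNQ
  · exact div_ne_zero (Int.cast_ne_zero.mpr (wit_k_ne_zero hu0 hr hρ hρpos hmin hN hk3)) hNQ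
  · have e1 : x - y = ((k1:ℝ)/N) / ρ ^ n1 := by
      rw [eq_div_iff (pow_ne_zero _ hρne)]
      linear_combination he1
    have e2 : y - z = ((k2:ℝ)/N) / ρ ^ n2 := by
      rw [eq_div_iff (pow_ne_zero _ hρne)]
      linear_combination he2
    have e3 : x - z = ((k3:ℝ)/N) / ρ ^ n3 := by
      rw [eq_div_iff (pow_ne_zero _ hρne)]
      linear_combination he3
    have hsum : (x - y) + (y - z) = (x - z) := by ring
    rw [e1, e2, e3] at hsum
    push_cast
    push_cast at hsum
    convert hsum using 3 <;> ring

lemma common_class (Λ : Set ℝ)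
    (hwit : ∀ x ∈ Λ, ∀ y ∈ Λ, x ≠ y → ∃ n, Wit N ρ x y n) :
    ∃ m, m < r ∧ ∀ x ∈ Λ, ∀ y ∈ Λ, x ≠ y → ∃ t : ℕ, Wit N ρ x y (m + r * t) := by
  by_cases hpair : ∃ a ∈ Λ, ∃ b ∈ Λ, a ≠ b
  · obtain ⟨a, ha, b, hb, hab⟩ := hpair
    obtain ⟨n₀, hW₀⟩ := hwit a ha b hb hab
    refine ⟨n₀ % r, Nat.mod_lt _ (by omega), ?_⟩
    have key3 : ∀ x ∈ Λ, ∀ y ∈ Λ, ∀ z ∈ Λ, x ≠ y → y ≠ z → x ≠ z →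
        ∀ n1 n2, Wit N ρ x y n1 → Wit N ρ y z n2 → n1 % r = n2 % r := by
      intro x hx y hy z hz hxy hyz hxz n1 n2 w1 w2
      obtain ⟨n3, w3⟩ := hwit x hx z hz hxz
      exact (wit_triangle hu0 hr hρ hρpos hmin hN x y z hxy hyz hxz n1 n2 n3 w1 w2 w3).1
    have claim : ∀ c ∈ Λ, ∀ d ∈ Λ, c ≠ d → ∀ n, Wit N ρ c d n → n % r = n₀ % r := by
      intro c hc d hd hcd n w
      by_cases hca : c = a
      · by_cases hdb : d = b
        · have hW : Wit N ρ c d n₀ := by rw [hca, hdb]; exact hW₀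
          exact wit_same hu0 hr hρ hρpos hmin hN c d hcd n n₀ w hW
        · -- c = a, d ∉ {b}; pairs (b,c) and (c,d)
          have hWbc : Wit N ρ b c n₀ := by
            rw [hca]; exact wit_symm a b n₀ hW₀
          have hbc : b ≠ c := by rw [hca]; exact Ne.symm hab
          have hbd : b ≠ d := fun h => hdb h.symm
          exact (key3 b hb c hc d hd hbc hcd hbd n₀ n hWbc w).symm
      · by_cases hcb : c = b
        · by_cases hda : d = a
          · have hW : Wit N ρ c d n₀ := by
              rw [hcb, hda]; exact wit_symm a b n₀ hW₀
            exact wit_same hu0 hr hρ hρpos hmin hN c d hcd n n₀ w hW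
          · -- c = b, d ∉ {a}; pairs (a,c) and (c,d)
            have hWac : Wit N ρ a c n₀ := by rw [hcb]; exact hW₀
            have hac : a ≠ c := by rw [hcb]; exact hab
            have had : a ≠ d := fun h => hda h.symm
            exact (key3 a ha c hc d hd hac hcd had n₀ n hWac w).symm
        · by_cases hda : d = a
          · -- pairs (c,d) and (d,b): key3 c d b
            have hWdb : Wit N ρ d b n₀ := by rw [hda]; exact hW₀
            have hdbne : d ≠ b := by
              rw [hda]; exact hab
            have hcbne : c ≠ b := hcb
            exact key3 c hc d hd b hb hcd hdbne hcbne n n₀ w hWdb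
          · by_cases hdb : d = b
            · -- pairs (c,d) and (d,a): key3 c d a
              have hWda : Wit N ρ d a n₀ := by
                rw [hdb]; exact wit_symm a b n₀ hW₀
              have hdane : d ≠ a := by rw [hdb]; exact Ne.symm hab
              exact key3 c hc d hd a ha hcd hdane hca n n₀ w hWda
            · -- generic: chain through b
              have hbc : b ≠ c := fun h => hcb h.symm
              obtain ⟨n1, w1⟩ := hwit b hb c hc hbc
              have s1 : n₀ % r = n1 % r :=
                key3 a ha b hb c hc hab hbc (fun h => hca h.symm) n₀ n1 hW₀ w1
              have s2 : n1 % r = n % r :=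
                key3 b hb c hc d hd hbc hcd (fun h => hdb h.symm) n1 n w1 w
              omega
    intro x hx y hy hxy
    obtain ⟨n, w⟩ := hwit x hx y hy hxy
    have hmod := claim x hx y hy hxy n w
    refine ⟨n / r, ?_⟩
    have hdm := Nat.div_add_mod n r
    have heq : n₀ % r + r * (n / r) = n := by omega
    rwa [heq]
  · push_neg at hpair
    refine ⟨0, by omega, fun x hx y hy hxy => absurd (hpair x hx y hy) (by simpa using hxy)⟩
end Alg

end WitB

section NuB
variable {N : ℕ} {a : ℝ}
noncomputable def digit (N : ℕ) (n : ℕ) (x : ℝ) : ℤ := ⌊(N:ℝ)^(n+1) * x⌋ % N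

noncomputable def phi (N : ℕ) (a : ℝ) (x : ℝ) : ℝ := ∑' n, a^n * (digit N n x : ℝ)

noncomputable def Tmap (N j : ℕ) : ℝ → ℝ := fun y => (y + j) / N

section basic
variable (hN : 1 < N) (ha0 : 0 < a) (ha1 : a < 1)

lemma digit_nonneg (hN : 1 < N) (n : ℕ) (x : ℝ) : 0 ≤ digit N n x :=
  Int.emod_nonneg _ (by exact_mod_cast (by omega : N ≠ 0))

include hN in
lemma digit_lt (n : ℕ) (x : ℝ) : digit N n x < N :=
  Int.emod_lt_of_pos _ (by exact_mod_cast Nat.pos_of_ne_zero (by omega))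

include hN ha0 ha1 in
lemma summable_phi (x : ℝ) : Summable (fun n => a^n * (digit N n x : ℝ)) := by
  apply Summable.of_nonneg_of_le
  · intro n
    have := digit_nonneg (N := N) hN n x
    positivity
  · intro n
    have h1 : (digit N n x : ℝ) ≤ (N:ℝ) := by
      exact_mod_cast le_of_lt (digit_lt hN n x)
    calc a^n * (digit N n x : ℝ) ≤ a^n * N := by
          apply mul_le_mul_of_nonneg_left h1; positivity
      _ = (N:ℝ) * a^n := by ring
  · exact (summable_geometric_of_lt_one (le_of_lt ha0) ha1).mul_left _

lemma measurable_digit (n : ℕ) : Measurable (fun x : ℝ => (digit N n x : ℝ)) := by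
  have h1 : Measurable (fun x : ℝ => (N:ℝ)^(n+1) * x) := by fun_prop
  have h2 : Measurable (Int.floor : ℝ → ℤ) := Int.measurable_floor
  have h3 : Measurable (fun z : ℤ => ((z % N : ℤ) : ℝ)) := Measurable.of_discrete
  exact h3.comp (h2.comp h1)

include hN ha0 ha1 in
lemma measurable_phi : Measurable (phi N a) := by
  have : ∀ x, Filter.Tendsto (fun K => ∑ n ∈ Finset.range K, a^n * (digit N n x : ℝ))
      Filter.atTop (nhds (phi N a x)) := by
    intro x
    exact ((summable_phi hN ha0 ha1 x).hasSum).tendsto_sum_nat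
  apply measurable_of_tendsto_metrizable' Filter.atTop _ (by
    rw [tendsto_pi_nhds]; exact this)
  intro K
  apply Finset.measurable_sum
  intro n _
  exact (measurable_digit n).const_mul _

include hN in
lemma digit_T_zero (j : ℕ) (hj : j < N) (y : ℝ) (hy : y ∈ Set.Ico (0:ℝ) 1) :
    digit N 0 (Tmap N j y) = j := by
  have hN0 : (0:ℝ) < N := by positivity
  have harg : (N:ℝ)^(0+1) * (Tmap N j y) = y + (j:ℤ) := by
    simp only [Tmap, pow_one]
    push_cast
    field_simp
  rw [digit, harg, Int.floor_add_intCast]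
  have h0 : ⌊y⌋ = 0 := by
    rw [Int.floor_eq_zero_iff]
    exact hy
  rw [h0, zero_add]
  exact Int.emod_eq_of_lt (by positivity) (by exact_mod_cast hj)

include hN in
lemma digit_T_succ (j : ℕ) (hj : j < N) (y : ℝ) (n : ℕ) :
    digit N (n+1) (Tmap N j y) = digit N n y := by
  have hN0 : (0:ℝ) < N := by positivity
  have harg : (N:ℝ)^(n+1+1) * (Tmap N j y) = (N:ℝ)^(n+1) * y + ((N^(n+1) * j : ℕ) : ℤ) := by
    simp only [Tmap]
    push_cast
    field_simp
    ring
  rw [digit, harg, Int.floor_add_intCast, digit]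
  have : ((N^(n+1) * j : ℕ) : ℤ) = (N:ℤ) * (N^n * j) := by push_cast; ring
  rw [this, Int.add_mul_emod_self_left]

include hN ha0 ha1 in
lemma phi_T (j : ℕ) (hj : j < N) (y : ℝ) (hy : y ∈ Set.Ico (0:ℝ) 1) :
    phi N a (Tmap N j y) = a * phi N a y + j := by
  have hsum := summable_phi hN ha0 ha1 (Tmap N j y)
  rw [phi, hsum.tsum_eq_zero_add]
  rw [pow_zero, one_mul, digit_T_zero hN j hj y hy]
  have hterm : ∀ n : ℕ, a^(n+1) * ((digit N (n+1) (Tmap N j y)) : ℝ)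
      = a * (a^n * (digit N n y : ℝ)) := by
    intro n
    rw [digit_T_succ hN j hj y n, pow_succ]
    ring
  simp only [hterm]
  rw [tsum_mul_left, phi]
  push_cast
  ring

-- the restricted Lebesgue measure
noncomputable def Leb : Measure ℝ := volume.restrict (Set.Ico (0:ℝ) 1)

instance : IsProbabilityMeasure Leb := by
  constructor
  rw [Leb, Measure.restrict_apply_univ]
  simp [Real.volume_Ico]

lemma measurable_Tmap (j : ℕ) : Measurable (Tmap N j) := by
  unfold Tmap; fun_prop

include hN in
lemma cover_Ico : Set.Ico (0:ℝ) 1 = ⋃ j ∈ Finset.range N, Set.Ico ((j:ℝ)/N) ((j+1)/N) := by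
  have hN0 : (0:ℝ) < N := by positivity
  ext y
  simp only [Set.mem_Ico, Set.mem_iUnion, Finset.mem_range]
  constructor
  · rintro ⟨h0, h1⟩
    have hNy0 : (0:ℝ) ≤ (N:ℝ) * y := by positivity
    set z := ⌊(N:ℝ) * y⌋ with hz
    have hz0 : 0 ≤ z := Int.floor_nonneg.mpr hNy0
    have hzN : z < N := by
      rw [hz, Int.floor_lt]
      push_cast
      nlinarith
    refine ⟨z.toNat, ?_, ?_, ?_⟩
    · omega
    · rw [div_le_iff₀ hN0]
      have := Int.floor_le ((N:ℝ) * y)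
      rw [← hz] at this
      have hc : ((z.toNat : ℕ) : ℝ) = (z : ℝ) := by
        exact_mod_cast congrArg Int.cast (Int.toNat_of_nonneg hz0)
      rw [hc]
      linarith
    · rw [lt_div_iff₀ hN0]
      have := Int.lt_floor_add_one ((N:ℝ) * y)
      rw [← hz] at this
      have hc : ((z.toNat : ℕ) : ℝ) = (z : ℝ) := by
        exact_mod_cast congrArg Int.cast (Int.toNat_of_nonneg hz0)
      rw [hc]
      linarith
  · rintro ⟨j, hjN, hj1, hj2⟩
    constructor
    · have : (0:ℝ) ≤ (j:ℝ)/N := by positivity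
      linarith
    · have hj2' : y < ((j:ℝ)+1)/N := hj2
      have : ((j:ℝ)+1)/N ≤ 1 := by
        rw [div_le_one hN0]
        have : (j:ℝ) + 1 ≤ N := by exact_mod_cast hjN
        linarith
      linarith

include hN in
lemma Tmap_preimage (j : ℕ) (hj : j < N) :
    (Tmap N j) ⁻¹' (Set.Ico ((j:ℝ)/N) ((j+1)/N)) = Set.Ico (0:ℝ) 1 := by
  have hN0 : (0:ℝ) < N := by positivity
  ext y
  simp only [Set.mem_preimage, Set.mem_Ico, Tmap]
  rw [div_le_div_iff_of_pos_right hN0, div_lt_div_iff_of_pos_right hN0]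
  constructor
  · rintro ⟨h1, h2⟩; exact ⟨by linarith, by linarith⟩
  · rintro ⟨h1, h2⟩; exact ⟨by linarith, by linarith⟩

include hN in
lemma map_Tmap_volume (j : ℕ) :
    Measure.map (Tmap N j) volume = ((N:ℝ≥0∞)) • volume := by
  have hN0 : (0:ℝ) < N := by positivity
  have hinv : (1/(N:ℝ)) ≠ 0 := by positivity
  have hcomp : Tmap N j = (fun z => ((j:ℝ)/N) + z) ∘ (fun y => (1/(N:ℝ)) * y) := by
    funext y
    simp only [Tmap, Function.comp_apply]
    field_simp
    ring
  rw [hcomp, ← Measure.map_map (by fun_prop) (by fun_prop)]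
  rw [Real.map_volume_mul_left hinv]
  rw [Measure.map_smul, map_add_left_eq_self volume ((j:ℝ)/N)]
  congr 1
  rw [abs_of_pos (by positivity : (0:ℝ) < (1/(N:ℝ))⁻¹)]
  rw [one_div, inv_inv]
  exact ENNReal.ofReal_natCast N

include hN in
lemma map_Tmap_Leb (j : ℕ) (hj : j < N) :
    Leb.map (Tmap N j) = (N:ℝ≥0∞) • volume.restrict (Set.Ico ((j:ℝ)/N) ((j+1)/N)) := by
  rw [Leb, ← Tmap_preimage hN j hj,
    ← Measure.restrict_map (measurable_Tmap j) measurableSet_Ico,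
    map_Tmap_volume hN j, Measure.restrict_smul]

include hN in
lemma leb_decomp :
    Leb = (N:ℝ≥0∞)⁻¹ • ∑ j ∈ Finset.range N, Leb.map (Tmap N j) := by
  have hNe : (N:ℝ≥0∞) ≠ 0 := by
    simp; omega
  have hNt : (N:ℝ≥0∞) ≠ ⊤ := ENNReal.natCast_ne_top N
  have h1 : ∑ j ∈ Finset.range N, Leb.map (Tmap N j)
      = (N:ℝ≥0∞) • ∑ j ∈ Finset.range N, volume.restrict (Set.Ico ((j:ℝ)/N) ((j+1)/N)) := by
    rw [Finset.smul_sum]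
    exact Finset.sum_congr rfl fun j hj => map_Tmap_Leb hN j (Finset.mem_range.mp hj)
  rw [h1, smul_smul, ENNReal.inv_mul_cancel hNe hNt, one_smul]
  -- now : Leb = ∑ restricts
  ext s hs
  rw [Measure.finset_sum_apply]
  simp only [Measure.restrict_apply hs]
  rw [Leb, Measure.restrict_apply hs]
  rw [cover_Ico hN]
  rw [Set.inter_iUnion₂]
  rw [measure_biUnion_finset ?hd (fun j _ => hs.inter measurableSet_Ico)]
  · rintro i hi j hj hij
    apply Set.disjoint_of_subset Set.inter_subset_right Set.inter_subset_right
    rw [Set.Ico_disjoint_Ico]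
    have hN0 : (0:ℝ) < N := by positivity
    rcases Nat.lt_or_ge i j with h | h
    · apply le_trans (min_le_left _ _)
      apply le_trans ?_ (le_max_right _ _)
      rw [div_le_div_iff_of_pos_right hN0]
      exact_mod_cast h
    · have hji : j < i := by omega
      apply le_trans (min_le_right _ _)
      apply le_trans ?_ (le_max_left _ _)
      rw [div_le_div_iff_of_pos_right hN0]
      exact_mod_cast hji

include hN ha0 ha1 in
theorem nu_selfSimilar : IsSelfSimilar a N (Leb.map (phi N a)) := by
  have hphi := measurable_phi hN ha0 ha1
  rw [IsSelfSimilar]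
  ext s hs
  have hSmeas : ∀ j : ℕ, Measurable (fun x : ℝ => a * x + (j:ℝ)) := by
    intro j; fun_prop
  have hLHS : (Leb.map (phi N a)) s
      = (N:ℝ≥0∞)⁻¹ * ∑ j ∈ Finset.range N, Leb ((Tmap N j) ⁻¹' ((phi N a) ⁻¹' s)) := by
    rw [Measure.map_apply hphi hs]
    conv_lhs => rw [leb_decomp hN]
    rw [Measure.smul_apply, Measure.finset_sum_apply, smul_eq_mul]
    congr 1
    refine Finset.sum_congr rfl fun j hj => ?_
    rw [Measure.map_apply (measurable_Tmap j) (hphi hs)]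
  have hRHS : ((N:ℝ≥0∞)⁻¹ • ∑ j ∈ Finset.range N, (Leb.map (phi N a)).map (fun x => a * x + (j:ℝ))) s
      = (N:ℝ≥0∞)⁻¹ * ∑ j ∈ Finset.range N, Leb ((phi N a) ⁻¹' ((fun x => a * x + (j:ℝ)) ⁻¹' s)) := by
    rw [Measure.smul_apply, Measure.finset_sum_apply, smul_eq_mul]
    congr 1
    refine Finset.sum_congr rfl fun j hj => ?_
    rw [Measure.map_apply (hSmeas j) hs, Measure.map_apply hphi ((hSmeas j) hs)]
  rw [hLHS, hRHS]
  congr 1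
  refine Finset.sum_congr rfl fun j hj => ?_
  have hjN := Finset.mem_range.mp hj
  have hA : MeasurableSet ((Tmap N j) ⁻¹' ((phi N a) ⁻¹' s)) :=
    (measurable_Tmap j) (hphi hs)
  have hB : MeasurableSet ((phi N a) ⁻¹' ((fun x => a * x + (j:ℝ)) ⁻¹' s)) :=
    hphi ((hSmeas j) hs)
  rw [Leb, Measure.restrict_apply hA, Measure.restrict_apply hB]
  congr 1
  ext y
  simp only [Set.mem_inter_iff, Set.mem_preimage, Set.mem_Ico]
  constructor
  · rintro ⟨h1, h2⟩
    refine ⟨?_, h2⟩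
    rwa [← phi_T hN ha0 ha1 j hjN y h2]
  · rintro ⟨h1, h2⟩
    refine ⟨?_, h2⟩
    rwa [phi_T hN ha0 ha1 j hjN y h2]

end basic

end NuB

section PB
variable (κ : Measure ℝ) [IsProbabilityMeasure κ]

lemma memLp_eFun (w : ℝ) : MemLp (eFun w) 2 κ := by
  refine MemLp.of_bound (continuous_eFun w).aestronglyMeasurable 1 ?_
  filter_upwards with x
  rw [norm_eFun]

noncomputable def eLp (w : ℝ) : Lp ℂ 2 κ := (memLp_eFun κ w).toLp (eFun w)

lemma eLp_coe (w : ℝ) : (↑↑(eLp κ w) : ℝ → ℂ) =ᶠ[ae κ] eFun w := (memLp_eFun κ w).coeFn_toLp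

lemma inner_eLp (w ξ : ℝ) : (inner ℂ (eLp κ w) (eLp κ ξ) : ℂ) = FT κ (ξ - w) := by
  rw [MeasureTheory.L2.inner_def]
  have h1 : ∀ᵐ x ∂κ, (inner ℂ ((eLp κ w : Lp ℂ 2 κ) x) ((eLp κ ξ : Lp ℂ 2 κ) x) : ℂ)
      = eFun (ξ - w) x := by
    filter_upwards [eLp_coe κ w, eLp_coe κ ξ] with x hw hξ
    rw [hw, hξ, RCLike.inner_apply', conj_eFun, eFun_mul]
    congr 1
    ring
  rw [integral_congr_ae h1, ← FT_eq]

lemma inner_eLp_left (w : ℝ) (f : Lp ℂ 2 κ) :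
    (inner ℂ (eLp κ w) f : ℂ) = ∫ x, f x * (starRingEnd ℂ) (eFun w x) ∂κ := by
  rw [MeasureTheory.L2.inner_def]
  apply integral_congr_ae
  filter_upwards [eLp_coe κ w] with x hw
  rw [hw, RCLike.inner_apply']
  ring

lemma norm_sq_eLp (ξ : ℝ) : ‖eLp κ ξ‖ ^ 2 = 1 := by
  rw [@norm_sq_eq_re_inner ℂ, inner_eLp, sub_self, FT_zero]
  simp

-- Bessel for a shifted family
lemma bessel_family {ι : Type*} (v : ι → ℝ) (hinj : ∀ i j : ι, i ≠ j → FT κ (v j - v i) = 0)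
    (ξ : ℝ) :
    (Summable fun i => ‖FT κ (ξ - v i)‖ ^ 2) ∧ (∑' i, ‖FT κ (ξ - v i)‖ ^ 2) ≤ 1 := by
  classical
  have hON : Orthonormal ℂ (fun i => eLp κ (v i)) := by
    rw [orthonormal_iff_ite]
    intro i j
    rw [inner_eLp]
    by_cases h : i = j
    · subst h
      rw [sub_self, FT_zero, if_pos rfl]
    · rw [if_neg h, hinj i j h]
  have hsummable := Orthonormal.inner_products_summable (eLp κ ξ) hON
  have hle := Orthonormal.tsum_inner_products_le (eLp κ ξ) hON
  rw [norm_sq_eLp] at hle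
  have hrw : ∀ i, ‖(inner ℂ (eLp κ (v i)) (eLp κ ξ) : ℂ)‖ ^ 2 = ‖FT κ (ξ - v i)‖ ^ 2 := by
    intro i
    rw [inner_eLp]
  constructor
  · refine Summable.congr hsummable fun i => hrw i
  · calc (∑' i, ‖FT κ (ξ - v i)‖ ^ 2) = ∑' i, ‖(inner ℂ (eLp κ (v i)) (eLp κ ξ) : ℂ)‖ ^ 2 :=
        tsum_congr fun i => (hrw i).symm
    _ ≤ 1 := hle

-- Parseval from a spectrum
lemma parseval (Λ : Set ℝ) (hON : ExpOrthonormal κ Λ) (hT : ExpTotal κ Λ) (ξ : ℝ) :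
    HasSum (fun l : Λ => ‖FT κ (ξ - (l:ℝ))‖ ^ 2) 1 := by
  classical
  set v : Λ → Lp ℂ 2 κ := fun l => eLp κ (l : ℝ) with hv
  have horth : Orthonormal ℂ v := by
    rw [orthonormal_iff_ite]
    intro i j
    rw [hv]
    simp only
    rw [inner_eLp]
    by_cases h : i = j
    · subst h; rw [sub_self, FT_zero, if_pos rfl]
    · rw [if_neg h]
      have hne : (j:ℝ) ≠ (i:ℝ) := fun hc => h (Subtype.ext hc.symm)
      have := hON (j:ℝ) j.2 (i:ℝ) i.2
      rw [if_neg hne] at this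
      exact this
  have hbot : (Submodule.span ℂ (Set.range v))ᗮ = ⊥ := by
    rw [Submodule.eq_bot_iff]
    intro f hf
    apply hT f
    intro l hl
    have hmem : v ⟨l, hl⟩ ∈ Submodule.span ℂ (Set.range v) :=
      Submodule.subset_span (Set.mem_range_self _)
    have h0 : (inner ℂ (v ⟨l, hl⟩) f : ℂ) = 0 :=
      (Submodule.mem_orthogonal _ _).mp hf _ hmem
    rw [hv] at h0
    simp only at h0
    rw [inner_eLp_left] at h0
    exact h0
  set b := HilbertBasis.mkOfOrthogonalEqBot horth hbot with hb
  have hcoe := HilbertBasis.coe_mkOfOrthogonalEqBot horth hbot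
  have hhs := b.hasSum_inner_mul_inner (eLp κ ξ) (eLp κ ξ)
  rw [hb] at hhs
  rw [hcoe] at hhs
  have hterm : ∀ l : Λ, (inner ℂ (eLp κ ξ) (v l) : ℂ) * (inner ℂ (v l) (eLp κ ξ) : ℂ)
      = ((‖FT κ (ξ - (l:ℝ))‖ ^ 2 : ℝ) : ℂ) := by
    intro l
    rw [← inner_conj_symm (eLp κ ξ) (v l)]
    set z : ℂ := inner ℂ (v l) (eLp κ ξ) with hz
    have h1 : (starRingEnd ℂ) z * z = ((Complex.normSq z : ℝ) : ℂ) := by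
      rw [mul_comm]
      exact Complex.mul_conj z
    rw [h1]
    congr 1
    rw [Complex.normSq_eq_norm_sq]
    rw [hz, hv]
    simp only
    rw [inner_eLp]
  have hinner_self : (inner ℂ (eLp κ ξ) (eLp κ ξ) : ℂ) = 1 := by
    rw [inner_eLp, sub_self, FT_zero]
  rw [hinner_self] at hhs
  simp only [hterm] at hhs
  have := (Complex.hasSum_iff _ _).mp hhs
  have hre := this.1
  simp only [Complex.ofReal_re, Complex.one_re] at hre
  exact hre


end PB

section FinB
lemma FT_drop (κ : Measure ℝ) [IsProbabilityMeasure κ] (a : ℝ) (N : ℕ) (hN : 0 < N)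
    (hκ : IsSelfSimilar a N κ) (ζ : ℝ) (m : ℕ) :
    ‖FT κ ζ‖ ≤ ‖FT κ (a ^ m * ζ)‖ := by
  rw [FT_iter κ a N hN hκ ζ m, norm_mul]
  have h1 : ‖∏ n ∈ Finset.range m, mfun N (a ^ n * ζ)‖ ≤ 1 := by
    rw [norm_prod]
    exact Finset.prod_le_one (fun i _ => norm_nonneg _) (fun i _ => norm_mfun_le_one N hN _)
  calc ‖∏ n ∈ Finset.range m, mfun N (a ^ n * ζ)‖ * ‖FT κ (a ^ m * ζ)‖
      ≤ 1 * ‖FT κ (a ^ m * ζ)‖ := mul_le_mul_of_nonneg_right h1 (norm_nonneg _)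
    _ = ‖FT κ (a ^ m * ζ)‖ := one_mul _

lemma FT_zero_witness (μ : Measure ℝ) [IsProbabilityMeasure μ] (ρ : ℝ) (N : ℕ)
    (hμ : IsSelfSimilar ρ N μ) (hρ0 : 0 < ρ) (hρ1 : ρ < 1) (hN : 1 < N)
    (ζ : ℝ) (h : FT μ ζ = 0) :
    ∃ n : ℕ, ∃ k : ℤ, ¬ (N:ℤ) ∣ k ∧ ρ ^ n * ζ = (k:ℝ) / N := by
  obtain ⟨δ, hδpos, hδ⟩ := FT_ne_zero_near μ
  have hζne : ζ ≠ 0 := by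
    rintro rfl
    rw [FT_zero] at h
    exact one_ne_zero h
  have habs : 0 < |ζ| := abs_pos.mpr hζne
  have htendsto := tendsto_pow_atTop_nhds_zero_of_lt_one (le_of_lt hρ0) hρ1
  have hev : ∀ᶠ K in Filter.atTop, ρ ^ K < δ / |ζ| := by
    have hpos : (0:ℝ) < δ / |ζ| := by positivity
    exact htendsto.eventually_lt_const hpos
  obtain ⟨K, hK⟩ := hev.exists
  have hKbound : |ρ ^ K * ζ| ≤ δ := by
    rw [abs_mul, abs_of_pos (by positivity : (0:ℝ) < ρ ^ K)]
    rw [lt_div_iff₀ habs] at hK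
    linarith
  have hiter := FT_iter μ ρ N (by omega) hμ ζ K
  rw [h] at hiter
  have hFTne := hδ _ hKbound
  rcases mul_eq_zero.mp hiter.symm with hprod | hFT
  · obtain ⟨n, hn, hzero⟩ := Finset.prod_eq_zero_iff.mp hprod
    obtain ⟨k, hθ, hk⟩ := mfun_zero_imp N hN _ hzero
    exact ⟨n, k, hk, hθ⟩
  · exact absurd hFT hFTne

lemma FT_nu_vanish (ν : Measure ℝ) [IsProbabilityMeasure ν] (a : ℝ) (N : ℕ)
    (hν : IsSelfSimilar a N ν) (hN : 1 < N) (t : ℕ) (k : ℤ) (hk : ¬ (N:ℤ) ∣ k)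
    (ζ : ℝ) (heq : a ^ t * ζ = (k:ℝ) / N) : FT ν ζ = 0 := by
  rw [FT_iter ν a N (by omega) hν ζ (t+1)]
  apply mul_eq_zero_of_left
  apply Finset.prod_eq_zero (Finset.self_mem_range_succ t)
  rw [heq]
  exact mfun_eq_zero_of N hN k hk

lemma diamond (μ ν : Measure ℝ) [IsProbabilityMeasure μ] [IsProbabilityMeasure ν]
    (ρ a : ℝ) (r N : ℕ) (hμ : IsSelfSimilar ρ N μ) (hν : IsSelfSimilar a N ν)
    (hρ0 : 0 < ρ) (ha0 : 0 < a) (ha1 : a < 1) (hr : 1 < r) (hN : 1 < N)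
    (hρr : ρ ^ r = a) (ζ : ℝ) :
    ‖FT μ ζ‖ ≤ ‖mfun N (ρ * ζ)‖ * ‖FT ν ζ‖ := by
  have hN0 : 0 < N := by omega
  have key : ∀ T : ℕ, 1 ≤ T →
      ‖FT μ ζ‖ * ‖FT ν (a ^ T * ζ)‖ ≤ ‖mfun N (ρ * ζ)‖ * ‖FT ν ζ‖ := by
    intro T hT
    have hA := FT_iter μ ρ N hN0 hμ ζ (r * T)
    have hB := FT_iter ν a N hN0 hν ζ T
    classical
    set sset : Finset ℕ := insert 1 ((Finset.range T).image (fun t => r * t)) with hsset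
    have hsub : sset ⊆ Finset.range (r * T) := by
      intro x hx
      rw [hsset] at hx
      rcases Finset.mem_insert.mp hx with h1 | h2
      · rw [Finset.mem_range, h1]
        nlinarith [hr, hT]
      · obtain ⟨t, ht, rfl⟩ := Finset.mem_image.mp h2
        rw [Finset.mem_range] at ht ⊢
        have hr0 : 0 < r := by omega
        calc r * t < r * T := by
              exact (Nat.mul_lt_mul_left hr0).mpr ht
          _ ≤ r * T := le_refl _
    have h1notin : (1:ℕ) ∉ (Finset.range T).image (fun t => r * t) := by
      rw [Finset.mem_image]
      rintro ⟨t, ht, hrt⟩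
      have := Nat.eq_one_of_mul_eq_one_right hrt
      omega
    have hprod_le : ∏ n ∈ Finset.range (r * T), ‖mfun N (ρ ^ n * ζ)‖ ≤
        ‖mfun N (ρ * ζ)‖ * ∏ t ∈ Finset.range T, ‖mfun N (a ^ t * ζ)‖ := by
      rw [← Finset.prod_sdiff hsub (f := fun n => ‖mfun N (ρ ^ n * ζ)‖)]
      have hd : ∏ x ∈ Finset.range (r * T) \ sset, ‖mfun N (ρ ^ x * ζ)‖ ≤ 1 :=
        Finset.prod_le_one (fun i _ => norm_nonneg _) (fun i _ => norm_mfun_le_one N hN0 _)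
      have hss : ∏ x ∈ sset, ‖mfun N (ρ ^ x * ζ)‖
          = ‖mfun N (ρ * ζ)‖ * ∏ t ∈ Finset.range T, ‖mfun N (a ^ t * ζ)‖ := by
        rw [hsset, Finset.prod_insert h1notin, pow_one]
        congr 1
        rw [Finset.prod_image (fun t _ t' _ h => Nat.eq_of_mul_eq_mul_left (by omega) h)]
        refine Finset.prod_congr rfl fun t ht => ?_
        congr 2
        rw [pow_mul, hρr]
      rw [hss]
      have hssnn : (0:ℝ) ≤ ‖mfun N (ρ * ζ)‖ * ∏ t ∈ Finset.range T, ‖mfun N (a ^ t * ζ)‖ := by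
        apply mul_nonneg (norm_nonneg _)
        exact Finset.prod_nonneg fun i _ => norm_nonneg _
      calc (∏ x ∈ Finset.range (r * T) \ sset, ‖mfun N (ρ ^ x * ζ)‖) *
            (‖mfun N (ρ * ζ)‖ * ∏ t ∈ Finset.range T, ‖mfun N (a ^ t * ζ)‖)
          ≤ 1 * (‖mfun N (ρ * ζ)‖ * ∏ t ∈ Finset.range T, ‖mfun N (a ^ t * ζ)‖) :=
            mul_le_mul_of_nonneg_right hd hssnn
        _ = _ := one_mul _
    calc ‖FT μ ζ‖ * ‖FT ν (a ^ T * ζ)‖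
        = (∏ n ∈ Finset.range (r*T), ‖mfun N (ρ ^ n * ζ)‖) * ‖FT μ (ρ ^ (r*T) * ζ)‖
            * ‖FT ν (a ^ T * ζ)‖ := by
          rw [hA, norm_mul, norm_prod]
      _ ≤ (∏ n ∈ Finset.range (r*T), ‖mfun N (ρ ^ n * ζ)‖) * 1 * ‖FT ν (a ^ T * ζ)‖ := by
          apply mul_le_mul_of_nonneg_right _ (norm_nonneg _)
          exact mul_le_mul_of_nonneg_left (norm_FT_le_one μ _)
            (Finset.prod_nonneg fun i _ => norm_nonneg _)
      _ = (∏ n ∈ Finset.range (r*T), ‖mfun N (ρ ^ n * ζ)‖) * ‖FT ν (a ^ T * ζ)‖ := by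
          rw [mul_one]
      _ ≤ (‖mfun N (ρ * ζ)‖ * ∏ t ∈ Finset.range T, ‖mfun N (a ^ t * ζ)‖)
            * ‖FT ν (a ^ T * ζ)‖ :=
          mul_le_mul_of_nonneg_right hprod_le (norm_nonneg _)
      _ = ‖mfun N (ρ * ζ)‖ * ((∏ t ∈ Finset.range T, ‖mfun N (a ^ t * ζ)‖)
            * ‖FT ν (a ^ T * ζ)‖) := by ring
      _ = ‖mfun N (ρ * ζ)‖ * ‖FT ν ζ‖ := by
          rw [hB, norm_mul, norm_prod]
  have hlim : Filter.Tendsto (fun T : ℕ => ‖FT μ ζ‖ * ‖FT ν (a ^ T * ζ)‖)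
      Filter.atTop (nhds (‖FT μ ζ‖ * 1)) := by
    apply Filter.Tendsto.const_mul
    have h1 : Filter.Tendsto (fun T : ℕ => a ^ T * ζ) Filter.atTop (nhds 0) := by
      have := (tendsto_pow_atTop_nhds_zero_of_lt_one (le_of_lt ha0) ha1).mul_const ζ
      rwa [zero_mul] at this
    have h2 : Filter.Tendsto (fun T : ℕ => FT ν (a ^ T * ζ)) Filter.atTop (nhds (FT ν 0)) :=
      ((FT_continuous ν).tendsto 0).comp h1
    rw [FT_zero] at h2
    have := h2.norm
    simpa using this
  have := le_of_tendsto hlim (Filter.eventually_atTop.mpr ⟨1, key⟩)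
  simpa using this

end FinB

end NSpec

open NSpec in
theorem stmt_9 (u : ℚ) (hu : 0 < u ∧ u < 1) (r : ℕ) (hr : 1 < r)
    (ρ : ℝ) (hρ : ρ ^ r = (u : ℝ)) (hρpos : 0 < ρ)
    (hmin : ∀ s : ℕ, 1 ≤ s → s < r → ¬ ∃ v : ℚ, ρ ^ s = (v : ℝ))
    (N : ℕ) (hN : 1 < N)
    (μ : Measure ℝ) [IsProbabilityMeasure μ] (hμ : IsSelfSimilar ρ N μ) :
    ¬ IsSpectral μ := by
  rintro ⟨Λ, hcount, hON, hTot⟩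
  obtain ⟨hu0, hu1⟩ := hu
  have haR0 : (0:ℝ) < (u:ℚ) := by exact_mod_cast hu0
  have haR1 : ((u:ℚ):ℝ) < 1 := by exact_mod_cast hu1
  have hρ1 : ρ < 1 := by
    by_contra hcon
    push_neg at hcon
    have h1 : (1:ℝ) ≤ ρ ^ r := one_le_pow₀ hcon
    rw [hρ] at h1
    linarith
  have hN0 : 0 < N := by omega
  -- the model measure ν
  have hphi_meas := measurable_phi (N := N) (a := ((u:ℚ):ℝ)) hN haR0 haR1
  set ν : Measure ℝ := Leb.map (phi N ((u:ℚ):ℝ)) with hνdef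
  haveI : IsProbabilityMeasure ν := Measure.isProbabilityMeasure_map hphi_meas.aemeasurable
  have hνss : IsSelfSimilar ((u:ℚ):ℝ) N ν := nu_selfSimilar hN haR0 haR1
  -- Λ is nonempty
  rcases Set.eq_empty_or_nonempty Λ with rfl | hne
  · have h0 : eLp μ 0 = 0 := hTot _ (fun l hl => absurd hl (Set.notMem_empty l))
    have h1 : (inner ℂ (eLp μ 0) (eLp μ 0) : ℂ) = 1 := by
      rw [inner_eLp, sub_self, FT_zero]
    rw [h0, inner_zero_left] at h1
    exact one_ne_zero h1.symm
  obtain ⟨lam0, hlam0⟩ := hne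
  -- witnesses for distinct pairs
  have hwit : ∀ x ∈ Λ, ∀ y ∈ Λ, x ≠ y → ∃ n, Wit N ρ x y n := by
    intro x hx y hy hxy
    have h := hON x hx y hy
    rw [if_neg hxy] at h
    obtain ⟨n, k, hk, he⟩ := FT_zero_witness μ ρ N hμ hρpos hρ1 hN (x - y) h
    exact ⟨n, k, hk, he⟩
  obtain ⟨m, hmr, hclass⟩ := common_class hu0 hr hρ hρpos hmin hN Λ hwit
  -- ν-orthogonality of the scaled family
  have hν_orth : ∀ i j : Λ, i ≠ j →
      FT ν (ρ^m * ((j:ℝ)) - ρ^m * ((i:ℝ))) = 0 := by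
    intro i j hij
    have hne2 : (j:ℝ) ≠ (i:ℝ) := fun hc => hij (Subtype.ext hc).symm
    obtain ⟨t, k, hk, he⟩ := hclass (j:ℝ) j.2 (i:ℝ) i.2 hne2
    apply FT_nu_vanish ν ((u:ℚ):ℝ) N hνss hN t k hk
    have hcalc : ((u:ℚ):ℝ)^t * (ρ^m * (j:ℝ) - ρ^m * (i:ℝ))
        = ρ^(m + r*t) * ((j:ℝ) - (i:ℝ)) := by
      rw [pow_add, pow_mul, hρ]
      ring
    rw [hcalc, he]
  -- choose ε and ξ
  obtain ⟨δ, hδpos, hδ⟩ := FT_ne_zero_near ν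
  have hρm : (0:ℝ) < ρ^m := by positivity
  have hρm1 : (0:ℝ) < ρ^(m+1) := by positivity
  set ε : ℝ := min (δ / ρ^m) (1 / (2 * ρ^(m+1))) with hεdef
  have hεpos : 0 < ε := by
    apply lt_min
    · positivity
    · positivity
  set ξ : ℝ := lam0 + ε with hξdef
  -- Parseval
  have hPar := parseval μ Λ hON hTot ξ
  set A : Λ → ℝ := fun l => ‖FT ν (ρ^m * (ξ - (l:ℝ)))‖^2 with hAdef
  set B : Λ → ℝ := fun l => ‖mfun N (ρ^(m+1) * (ξ - (l:ℝ)))‖^2 with hBdef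
  have hAnn : ∀ l, 0 ≤ A l := fun l => sq_nonneg _
  have hBnn : ∀ l, 0 ≤ B l := fun l => sq_nonneg _
  -- Bessel for A
  have hbes := bessel_family ν (fun l : Λ => ρ^m * (l:ℝ)) hν_orth (ρ^m * ξ)
  have hAcongr : ∀ l : Λ, ‖FT ν (ρ^m * ξ - ρ^m * (l:ℝ))‖^2 = A l := by
    intro l
    rw [hAdef]
    congr 2
    ring
  have hAsum : Summable A := Summable.congr hbes.1 hAcongr
  have hAle : (∑' l, A l) ≤ 1 := by
    rw [← tsum_congr hAcongr]
    exact hbes.2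
  -- per-term inequality
  have hterm : ∀ l : Λ, ‖FT μ (ξ - (l:ℝ))‖^2 ≤ B l * A l := by
    intro l
    have h1 : ‖FT μ (ξ - (l:ℝ))‖ ≤ ‖FT μ (ρ^m * (ξ - (l:ℝ)))‖ :=
      FT_drop μ ρ N hN0 hμ _ m
    have h2 : ‖FT μ (ρ^m * (ξ - (l:ℝ)))‖
        ≤ ‖mfun N (ρ * (ρ^m * (ξ - (l:ℝ))))‖ * ‖FT ν (ρ^m * (ξ - (l:ℝ)))‖ :=
      diamond μ ν ρ ((u:ℚ):ℝ) r N hμ hνss hρpos haR0 haR1 hr hN hρ _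
    have h3 : ρ * (ρ^m * (ξ - (l:ℝ))) = ρ^(m+1) * (ξ - (l:ℝ)) := by ring
    rw [h3] at h2
    have h4 : ‖FT μ (ξ - (l:ℝ))‖ ≤ ‖mfun N (ρ^(m+1) * (ξ - (l:ℝ)))‖
        * ‖FT ν (ρ^m * (ξ - (l:ℝ)))‖ := le_trans h1 h2
    have h5 := pow_le_pow_left₀ (norm_nonneg _) h4 2
    rw [mul_pow] at h5
    exact h5
  have hBle1 : ∀ l, B l ≤ 1 := by
    intro l
    have h1 := norm_mfun_le_one N hN0 (ρ^(m+1) * (ξ - (l:ℝ)))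
    have h0 := norm_nonneg (mfun N (ρ^(m+1) * (ξ - (l:ℝ))))
    have heq : B l = ‖mfun N (ρ^(m+1) * (ξ - (l:ℝ)))‖^2 := rfl
    rw [heq]
    nlinarith
  have hBAle : ∀ l, B l * A l ≤ A l := fun l =>
    mul_le_of_le_one_left (hAnn l) (hBle1 l)
  have hBAnn : ∀ l, 0 ≤ B l * A l := fun l => mul_nonneg (hBnn l) (hAnn l)
  have hBAsum : Summable (fun l => B l * A l) :=
    Summable.of_nonneg_of_le hBAnn hBAle hAsum
  have hParSum : Summable (fun l : Λ => ‖FT μ (ξ - (l:ℝ))‖^2) := hPar.summable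
  have h1le : (1:ℝ) ≤ ∑' l, B l * A l := by
    rw [← hPar.tsum_eq]
    exact Summable.tsum_le_tsum hterm hParSum hBAsum
  classical
  set l₀ : Λ := ⟨lam0, hlam0⟩ with hl₀def
  have hsplitBA := Summable.tsum_eq_add_tsum_ite hBAsum l₀
  have hsplitA := Summable.tsum_eq_add_tsum_ite hAsum l₀
  have hiteBAsum : Summable (fun l => if l = l₀ then 0 else B l * A l) := by
    apply Summable.of_nonneg_of_le _ _ hBAsum
    · intro l; split_ifs with h
      · exact le_refl 0
      · exact hBAnn l
    · intro l; split_ifs with h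
      · exact hBAnn l
      · exact le_refl _
  have hiteAsum : Summable (fun l => if l = l₀ then 0 else A l) := by
    apply Summable.of_nonneg_of_le _ _ hAsum
    · intro l; split_ifs with h
      · exact le_refl 0
      · exact hAnn l
    · intro l; split_ifs with h
      · exact hAnn l
      · exact le_refl _
  have hIcomp : (∑' l, if l = l₀ then 0 else B l * A l)
      ≤ (∑' l, if l = l₀ then 0 else A l) := by
    apply Summable.tsum_le_tsum _ hiteBAsum hiteAsum
    intro l
    by_cases h : l = l₀
    · simp [h]
    · simp only [if_neg h]
      exact hBAle l
  have hiteA_le : (∑' l, if l = l₀ then 0 else A l) ≤ 1 - A l₀ := by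
    have := hsplitA
    linarith [hAle]
  have hfinal : (1:ℝ) ≤ B l₀ * A l₀ + (1 - A l₀) := by
    calc (1:ℝ) ≤ ∑' l, B l * A l := h1le
      _ = B l₀ * A l₀ + (∑' l, if l = l₀ then 0 else B l * A l) := hsplitBA
      _ ≤ B l₀ * A l₀ + (∑' l, if l = l₀ then 0 else A l) := by linarith [hIcomp]
      _ ≤ B l₀ * A l₀ + (1 - A l₀) := by linarith [hiteA_le]
  -- compute A l₀ and B l₀
  have hξl₀ : ξ - (l₀:ℝ) = ε := by
    rw [hξdef, hl₀def]
    ring_nf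
  have hApos : 0 < A l₀ := by
    rw [hAdef]
    simp only [hξl₀]
    have hle : |ρ^m * ε| ≤ δ := by
      rw [abs_of_pos (by positivity)]
      have h1 : ε ≤ δ / ρ^m := min_le_left _ _
      calc ρ^m * ε ≤ ρ^m * (δ / ρ^m) := by
            apply mul_le_mul_of_nonneg_left h1 (le_of_lt hρm)
        _ = δ := by field_simp
    have := hδ _ hle
    have hpos : 0 < ‖FT ν (ρ^m * ε)‖ := norm_pos_iff.mpr this
    positivity
  have hBlt : B l₀ < 1 := by
    rw [hBdef]
    simp only [hξl₀]
    have hbound : ρ^(m+1) * ε ≤ 1/2 := by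
      have h1 : ε ≤ 1 / (2 * ρ^(m+1)) := min_le_right _ _
      calc ρ^(m+1) * ε ≤ ρ^(m+1) * (1 / (2 * ρ^(m+1))) := by
            apply mul_le_mul_of_nonneg_left h1 (le_of_lt hρm1)
        _ = 1/2 := by
            field_simp
    have hposθ : 0 < ρ^(m+1) * ε := by positivity
    have hnint : ¬ ∃ k : ℤ, ρ^(m+1) * ε = (k:ℝ) := by
      rintro ⟨k, hk⟩
      have h1 : (0:ℝ) < (k:ℝ) := hk ▸ hposθ
      have h2 : (k:ℝ) ≤ 1/2 := hk ▸ hbound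
      have h3 : 0 < k := by exact_mod_cast h1
      have h4 : (1:ℝ) ≤ (k:ℝ) := by exact_mod_cast h3
      linarith
    have := norm_mfun_lt_one N hN (ρ^(m+1) * ε) hnint
    nlinarith [norm_nonneg (mfun N (ρ^(m+1) * ε))]
  nlinarith [hfinal, hApos, hBlt]
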